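/- Let g ∈ GL(V) for V a finite-dimensional real vector space, with multiplicative Jordan decomposition g = g_e g_h g_u into commuting elliptic, hyperbolic, and unipotent parts. For v ∈ V, the following are equivalent: (i) both sequences (gⁿ v)_{n≥0} and (g⁻ⁿ v)_{n≥0} are bounded; (ii) v is fixed by g_h g_u. -/

import Mathlib

open Bornology

open Filter Topology in
lemma aux_le_zero {c : ℝ} (hc : 1 < c) (K : ℕ) (D : ℝ) {x : ℝ}
    (h : ∀ n : ℕ, c ^ n * x ≤ D * (n + 1) ^ K) : x ≤ 0 := by
  have hc0 : (0:ℝ) < c := lt_trans one_pos hc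
  have hlim : Tendsto (fun n : ℕ => D * (((n:ℝ) + 1) ^ K / c ^ n)) atTop (𝓝 0) := by
    have h1 := (tendsto_pow_const_div_const_pow_of_one_lt K hc).comp
      (tendsto_add_atTop_nat 1)
    rw [show (0:ℝ) = D * (c * 0) by ring]
    refine (((h1.const_mul c).const_mul D).congr ?_)
    intro n
    show D * (c * (((n+1:ℕ):ℝ) ^ K / c ^ (n+1 : ℕ))) = _
    push_cast
    rw [pow_succ]
    field_simp
  have hx : ∀ n : ℕ, x ≤ D * (((n:ℝ) + 1) ^ K / c ^ n) := by
    intro n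
    have hpow : (0:ℝ) < c ^ n := pow_pos hc0 n
    rw [mul_div_assoc', le_div_iff₀ hpow]
    calc x * c ^ n = c ^ n * x := by ring
    _ ≤ D * (n+1)^K := h n
    _ = D * ((n:ℝ)+1)^K := by push_cast; ring
  exact ge_of_tendsto' hlim hx

section AuxBO

variable {V : Type*} [NormedAddCommGroup V] [NormedSpace ℝ V]

local notation "A" => V →L[ℝ] V

set_option linter.unusedSectionVars false

lemma unip_bound {u : V →L[ℝ] V} {N : ℕ} (hu : u ^ N = 0) :
    ∃ C : ℝ, 0 < C ∧ ∀ n : ℕ, ‖(1 + u) ^ n‖ ≤ C * (n + 1) ^ (N + 1) := by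
  set M : ℝ := max ‖u‖ 1 with hM
  have hM1 : (1:ℝ) ≤ M := le_max_right _ _
  have hM0 : (0:ℝ) ≤ M := zero_le_one.trans hM1
  refine ⟨M ^ N, pow_pos (lt_of_lt_of_le one_pos hM1) N, fun n => ?_⟩
  have key : (1 + u) ^ n
      = ∑ m ∈ Finset.range (n + 1), u ^ m * ((n.choose m : ℕ) : V →L[ℝ] V) := by
    rw [add_comm]
    exact (Commute.one_right u).add_pow n |>.trans (by
      refine Finset.sum_congr rfl fun m _ => ?_
      rw [one_pow, mul_one])
  rw [key]
  have hB : ∀ m ∈ Finset.range (n + 1),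
      ‖u ^ m * ((n.choose m : ℕ) : V →L[ℝ] V)‖ ≤ ((n:ℝ) + 1) ^ N * M ^ N := by
    intro m _
    by_cases hm : N ≤ m
    · have : u ^ m = 0 := by
        rw [show m = N + (m - N) by omega, pow_add, hu, zero_mul]
      rw [this, zero_mul, norm_zero]
      positivity
    · push_neg at hm
      calc ‖u ^ m * ((n.choose m : ℕ) : V →L[ℝ] V)‖
          ≤ ‖u ^ m‖ * ‖((n.choose m : ℕ) : V →L[ℝ] V)‖ := norm_mul_le _ _
        _ ≤ M ^ N * ((n:ℝ) + 1) ^ N := by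
            apply mul_le_mul
            · have h1 : ‖u ^ m‖ ≤ M ^ m := by
                cases m with
                | zero => simp; exact ContinuousLinearMap.norm_id_le
                | succ k =>
                    calc ‖u ^ (k+1)‖ ≤ ‖u‖ ^ (k+1) := norm_pow_le' u (Nat.succ_pos k)
                    _ ≤ M ^ (k+1) := pow_le_pow_left₀ (norm_nonneg u) (le_max_left _ _) _
              exact h1.trans (pow_le_pow_right₀ hM1 (le_of_lt hm))
            · calc ‖((n.choose m : ℕ) : V →L[ℝ] V)‖ ≤ (n.choose m : ℝ) * ‖(1 : V →L[ℝ] V)‖ :=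
                  Nat.norm_cast_le _
                _ ≤ (n.choose m : ℝ) * 1 := by
                    apply mul_le_mul_of_nonneg_left ContinuousLinearMap.norm_id_le
                      (by positivity)
                _ = (n.choose m : ℝ) := mul_one _
                _ ≤ ((n:ℝ)) ^ m := by exact_mod_cast Nat.choose_le_pow n m
                _ ≤ ((n:ℝ) + 1) ^ m := by
                    apply pow_le_pow_left₀ (by positivity) (by linarith)
                _ ≤ ((n:ℝ) + 1) ^ N := by
                    apply pow_le_pow_right₀ (by linarith) (le_of_lt hm)
            · exact norm_nonneg _
            · positivity
        _ = ((n:ℝ) + 1) ^ N * M ^ N := mul_comm _ _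
  calc ‖∑ m ∈ Finset.range (n + 1), u ^ m * ((n.choose m : ℕ) : V →L[ℝ] V)‖
      ≤ ∑ m ∈ Finset.range (n + 1), ‖u ^ m * ((n.choose m : ℕ) : V →L[ℝ] V)‖ :=
        norm_sum_le _ _
    _ ≤ ∑ m ∈ Finset.range (n + 1), ((n:ℝ) + 1) ^ N * M ^ N := Finset.sum_le_sum hB
    _ = ((n:ℝ) + 1) * (((n:ℝ) + 1) ^ N * M ^ N) := by
        rw [Finset.sum_const, Finset.card_range, nsmul_eq_mul]; push_cast; ring
    _ = M ^ N * ((n:ℝ) + 1) ^ (N + 1) := by ring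


lemma elliptic_bound {ge : (V →L[ℝ] V)ˣ}
    (hell : IsCompact (closure (Set.range fun n : ℤ => ge ^ n))) :
    ∃ Ce : ℝ, 0 < Ce ∧ ∀ n : ℤ, ‖((ge ^ n : (V →L[ℝ] V)ˣ) : V →L[ℝ] V)‖ ≤ Ce := by
  have hK : IsCompact (Units.val '' closure (Set.range fun n : ℤ => ge ^ n)) :=
    hell.image Units.continuous_val
  obtain ⟨C, hC⟩ := (hK.isBounded).exists_norm_le
  refine ⟨max C 1, lt_of_lt_of_le one_pos (le_max_right _ _), fun n => ?_⟩
  have hmem : ((ge ^ n : (V →L[ℝ] V)ˣ) : V →L[ℝ] V)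
      ∈ Units.val '' closure (Set.range fun n : ℤ => ge ^ n) :=
    ⟨ge ^ n, subset_closure ⟨n, rfl⟩, rfl⟩
  exact (hC _ hmem).trans (le_max_left _ _)


lemma val_mul_apply (a b : (V →L[ℝ] V)ˣ) (w : V) :
    ((a * b : Aˣ) : A) w = (a : A) ((b : A) w) := by
  rw [Units.val_mul, ContinuousLinearMap.mul_apply]

lemma commute_apply {a b : (V →L[ℝ] V)ˣ} (h : Commute a b) (w : V) :
    (a : A) ((b : A) w) = (b : A) ((a : A) w) := by
  rw [← val_mul_apply, ← val_mul_apply, h.eq]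

lemma pow_eig (gh : (V →L[ℝ] V)ˣ) {c : ℝ} {w : V} (hw : (gh : A) w = c • w) :
    ∀ n : ℕ, ((gh ^ n : Aˣ) : A) w = c ^ n • w := by
  intro n
  induction n with
  | zero => simp
  | succ k ih =>
      rw [pow_succ, val_mul_apply, hw, map_smul, ih, smul_smul, pow_succ]
      ring_nf

lemma eig_zero (g ge gh gu : (V →L[ℝ] V)ˣ)
    (hc₁ : Commute ge gh) (hc₂ : Commute ge gu) (hc₃ : Commute gh gu)
    (hg : g = ge * gh * gu)
    (Ce : ℝ) (hCe : ∀ n : ℕ, ‖((ge⁻¹ ^ n : Aˣ) : A)‖ ≤ Ce)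
    (Cu : ℝ) (K : ℕ) (hCu : ∀ n : ℕ, ‖((gu⁻¹ ^ n : Aˣ) : A)‖ ≤ Cu * (n + 1) ^ K)
    {c : ℝ} (hc : 1 < c) {x : V} (hx : (gh : A) x = c • x)
    (B : ℝ) (hB : ∀ n : ℕ, ‖((g ^ n : Aˣ) : A) x‖ ≤ B) : x = 0 := by
  have hc0 : (0:ℝ) < c := lt_trans one_pos hc
  -- gu^n x is still a c-eigenvector of gh
  have hy : ∀ n : ℕ, (gh : A) (((gu ^ n : Aˣ) : A) x) = c • ((gu ^ n : Aˣ) : A) x := by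
    intro n
    rw [commute_apply (hc₃.pow_right n), hx, map_smul]
  -- decompose g^n
  have hgn : ∀ n : ℕ, (g ^ n : Aˣ) = ge ^ n * (gh ^ n * gu ^ n) := by
    intro n
    rw [hg, mul_assoc, (hc₁.mul_right hc₂).mul_pow, (hc₃).mul_pow]
  have hgnx : ∀ n : ℕ, ((g ^ n : Aˣ) : A) x
      = c ^ n • ((ge ^ n : Aˣ) : A) (((gu ^ n : Aˣ) : A) x) := by
    intro n
    rw [hgn n, val_mul_apply, val_mul_apply, pow_eig gh (hy n) n, map_smul]
  -- recover x
  have hrec : ∀ n : ℕ,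
      ((gu⁻¹ ^ n : Aˣ) : A) (((ge⁻¹ ^ n : Aˣ) : A)
        (((ge ^ n : Aˣ) : A) (((gu ^ n : Aˣ) : A) x))) = x := by
    intro n
    rw [← val_mul_apply, ← val_mul_apply, ← val_mul_apply]
    have h1 : (gu⁻¹ ^ n * ge⁻¹ ^ n * ge ^ n * gu ^ n : Aˣ) = 1 := by group
    rw [h1, Units.val_one, ContinuousLinearMap.one_apply]
  -- the estimate
  have hCe0 : 0 ≤ Ce := (norm_nonneg _).trans (hCe 0)
  have hCu0 : 0 ≤ Cu := by
    have := (norm_nonneg (((gu⁻¹ ^ 0 : Aˣ) : A))).trans (hCu 0)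
    simpa using this
  have hB0 : 0 ≤ B := (norm_nonneg _).trans (hB 0)
  have hkey : ∀ n : ℕ, c ^ n * ‖x‖ ≤ (Cu * (Ce * B)) * (n + 1) ^ K := by
    intro n
    set z := ((ge ^ n : Aˣ) : A) (((gu ^ n : Aˣ) : A) x) with hz
    set a := ‖((gu⁻¹ ^ n : Aˣ) : A)‖ with ha
    set b := ‖((ge⁻¹ ^ n : Aˣ) : A)‖ with hb
    have hxz : ‖x‖ ≤ a * (b * ‖z‖) := by
      conv_lhs => rw [← hrec n]
      calc ‖((gu⁻¹ ^ n : Aˣ) : A) (((ge⁻¹ ^ n : Aˣ) : A) z)‖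
          ≤ a * ‖((ge⁻¹ ^ n : Aˣ) : A) z‖ := ContinuousLinearMap.le_opNorm _ _
        _ ≤ a * (b * ‖z‖) := by
            apply mul_le_mul_of_nonneg_left (ContinuousLinearMap.le_opNorm _ _)
              (norm_nonneg _)
    have hzB : c ^ n * ‖z‖ ≤ B := by
      have : ‖((g ^ n : Aˣ) : A) x‖ = c ^ n * ‖z‖ := by
        rw [hgnx n, norm_smul, Real.norm_eq_abs, abs_of_pos (pow_pos hc0 n)]
      rw [← this]; exact hB n
    calc c ^ n * ‖x‖ ≤ c ^ n * (a * (b * ‖z‖)) :=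
          mul_le_mul_of_nonneg_left hxz (le_of_lt (pow_pos hc0 n))
      _ = a * (b * (c ^ n * ‖z‖)) := by ring
      _ ≤ a * (b * B) := by
          apply mul_le_mul_of_nonneg_left _ (norm_nonneg _)
          exact mul_le_mul_of_nonneg_left hzB (norm_nonneg _)
      _ ≤ (Cu * (↑n + 1) ^ K) * (Ce * B) := by
          apply mul_le_mul (hCu n) (mul_le_mul_of_nonneg_right (hCe n) hB0)
            (mul_nonneg (norm_nonneg _) hB0)
          exact mul_nonneg hCu0 (by positivity)
      _ = (Cu * (Ce * B)) * (↑n + 1) ^ K := by ring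
  have := aux_le_zero hc K (Cu * (Ce * B)) hkey
  have h0 : ‖x‖ = 0 := le_antisymm this (norm_nonneg x)
  exact norm_eq_zero.mp h0


section Proj

noncomputable def eigProj {ι : Type*} [Fintype ι] [DecidableEq ι]
    (b : Module.Basis ι ℝ V) (c : ι → ℝ) (t : ℝ) : V →ₗ[ℝ] V :=
  ∑ j ∈ Finset.univ.filter (fun j => c j = t), LinearMap.smulRight (b.coord j) (b j)

variable {ι : Type*} [Fintype ι] [DecidableEq ι] (b : Module.Basis ι ℝ V) (c : ι → ℝ)

lemma eigProj_apply (t : ℝ) (w : V) :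
    eigProj b c t w = ∑ j ∈ Finset.univ.filter (fun j => c j = t), b.repr w j • b j := by
  simp [eigProj, LinearMap.sum_apply, Module.Basis.coord_apply]

variable {gh : V →L[ℝ] V} (hb : ∀ i, gh (b i) = c i • b i)

include hb

lemma repr_eq_zero_of_eig {t : ℝ} {w : V} (hw : gh w = t • w) :
    ∀ i, c i ≠ t → b.repr w i = 0 := by
  intro i hi
  have h1 : gh w = ∑ j, (c j * b.repr w j) • b j := by
    conv_lhs => rw [← b.sum_repr w]
    rw [map_sum]
    refine Finset.sum_congr rfl fun j _ => ?_
    rw [map_smul, hb j, smul_smul, mul_comm]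
  have h2 : gh w = ∑ j, (t * b.repr w j) • b j := by
    rw [hw]
    conv_lhs => rw [← b.sum_repr w]
    rw [Finset.smul_sum]
    exact Finset.sum_congr rfl fun j _ => by rw [smul_smul]
  have h3 : (fun j => c j * b.repr w j) = fun j => t * b.repr w j := by
    have := h1.symm.trans h2
    have e1 := b.repr_sum_self (fun j => c j * b.repr w j)
    have e2 := b.repr_sum_self (fun j => t * b.repr w j)
    rw [← e1, ← e2, this]
  have h4 := congrFun h3 i
  have : (c i - t) * b.repr w i = 0 := by ring_nf; linarith [h4]
  rcases mul_eq_zero.mp this with h | h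
  · exact absurd (by linarith [sub_eq_zero.mp h]) hi
  · exact h

lemma eigProj_eig {t : ℝ} {w : V} (hw : gh w = t • w) : eigProj b c t w = w := by
  rw [eigProj_apply]
  conv_rhs => rw [← b.sum_repr w]
  rw [Finset.sum_filter]
  refine Finset.sum_congr rfl fun j _ => ?_
  by_cases hj : c j = t
  · simp [hj]
  · simp [hj, repr_eq_zero_of_eig b c hb hw j hj]

lemma eigProj_other {s t : ℝ} (hst : s ≠ t) {w : V} (hw : gh w = s • w) :
    eigProj b c t w = 0 := by
  rw [eigProj_apply]
  refine Finset.sum_eq_zero fun j hj => ?_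
  rw [Finset.mem_filter] at hj
  rw [repr_eq_zero_of_eig b c hb hw j (by rw [hj.2]; exact fun h => hst h.symm), zero_smul]

lemma eigProj_comm {G : V →L[ℝ] V} (hG : gh * G = G * gh) (t : ℝ) (w : V) :
    eigProj b c t (G w) = G (eigProj b c t w) := by
  have hGb : ∀ j, gh (G (b j)) = c j • G (b j) := by
    intro j
    have := congrFun (congrArg DFunLike.coe hG) (b j)
    simp only [ContinuousLinearMap.mul_apply] at this
    rw [this, hb j, map_smul]
  have h1 : G w = ∑ j, b.repr w j • G (b j) := by
    conv_lhs => rw [← b.sum_repr w]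
    rw [map_sum]
    exact Finset.sum_congr rfl fun j _ => by rw [map_smul]
  rw [h1, map_sum]
  have h2 : ∀ j, eigProj b c t (b.repr w j • G (b j))
      = if c j = t then b.repr w j • G (b j) else 0 := by
    intro j
    rw [map_smul]
    by_cases hj : c j = t
    · rw [if_pos hj, eigProj_eig b c hb (by rw [hGb j, hj])]
    · rw [if_neg hj, eigProj_other b c hb hj (hGb j), smul_zero]
  rw [Finset.sum_congr rfl fun j _ => h2 j, ← Finset.sum_filter]
  rw [eigProj_apply, map_sum]
  exact Finset.sum_congr rfl fun j _ => by rw [map_smul]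

lemma eigProj_is_eig (t : ℝ) (w : V) : gh (eigProj b c t w) = t • eigProj b c t w := by
  rw [eigProj_apply, map_sum, Finset.smul_sum]
  refine Finset.sum_congr rfl fun j hj => ?_
  rw [Finset.mem_filter] at hj
  rw [map_smul, hb j, hj.2, smul_smul, smul_smul, mul_comm]

omit hb in
lemma eigProj_repr (t : ℝ) (w : V) {i : ι} (hi : c i = t) :
    b.repr (eigProj b c t w) i = b.repr w i := by
  rw [eigProj_apply, map_sum]
  rw [show (∑ j ∈ Finset.univ.filter (fun j => c j = t), b.repr (b.repr w j • b j)) i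
    = ∑ j ∈ Finset.univ.filter (fun j => c j = t), b.repr w j * (if j = i then 1 else 0) from ?_]
  · rw [Finset.sum_eq_single i]
    · simp
    · intro j _ hji; simp [hji]
    · intro h; exact absurd (Finset.mem_filter.mpr ⟨Finset.mem_univ i, hi⟩) h
  · rw [Finsupp.finset_sum_apply]
    refine Finset.sum_congr rfl fun j _ => ?_
    rw [map_smul, b.repr_self, Finsupp.smul_apply, Finsupp.single_apply, smul_eq_mul]


end Proj

lemma natCast_apply' (n : ℕ) (w : V) : ((n : A)) w = (n:ℝ) • w := by
  induction n with
  | zero => simp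
  | succ k ih =>
      rw [Nat.cast_succ, ContinuousLinearMap.add_apply, ih, ContinuousLinearMap.one_apply,
        Nat.cast_succ, add_smul, one_smul]

lemma unip_decomp {u : V →L[ℝ] V} (n : ℕ) :
    ∃ q : V →L[ℝ] V, Commute u q ∧ (1 + u) ^ n = 1 + (n : A) * u + u ^ 2 * q := by
  induction n with
  | zero => exact ⟨0, Commute.zero_right u, by simp⟩
  | succ k ih =>
      obtain ⟨q, hq, hk⟩ := ih
      refine ⟨(k : A) + q + q * u, ?_, ?_⟩
      · exact (((Nat.cast_commute k u).symm.add_right hq).add_right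
          (hq.mul_right (Commute.refl u)))
      · rw [pow_succ, hk, Nat.cast_succ]
        have hcast : (k : A) * u ^ 2 = u ^ 2 * (k : A) := (Nat.cast_commute k (u^2)).eq
        have expand : u^2*((k:A)+q+q*u) = u^2*(k:A) + u^2*q + u^2*(q*u) := by noncomm_ring
        rw [expand, ← hcast]
        noncomm_ring

lemma unip_fixed {gu : (V →L[ℝ] V)ˣ} {N : ℕ} (hu : ((gu : A) - 1) ^ N = 0) {v : V} {B : ℝ}
    (hB : ∀ n : ℕ, ‖((gu ^ n : Aˣ) : A) v‖ ≤ B) : (gu : A) v = v := by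
  set u : A := (gu : A) - 1 with hudef
  have hgu1 : (gu : A) = 1 + u := by rw [hudef]; abel
  have hNv : (u ^ N) v = 0 := by rw [hu]; rfl
  have hex : ∃ m : ℕ, (u ^ m) v = 0 := ⟨N, hNv⟩
  classical
  set m := Nat.find hex with hm
  have hmv : (u ^ m) v = 0 := Nat.find_spec hex
  by_cases hm2 : 2 ≤ m
  · exfalso
    have hne : (u ^ (m - 1)) v ≠ 0 := Nat.find_min hex (by omega)
    set w := (u ^ (m - 1)) v with hwdef
    have hb : ∀ n : ℕ, (n:ℝ) * ‖w‖ ≤ ‖u ^ (m-2)‖ * B + ‖(u ^ (m-2)) v‖ := by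
      intro n
      obtain ⟨q, hq, hdec⟩ := unip_decomp (u := u) n
      have heval : (u ^ (m-2)) (((gu ^ n : Aˣ) : A) v)
          = (u ^ (m-2)) v + (n:ℝ) • w := by
        rw [Units.val_pow_eq_pow_val, hgu1, hdec]
        have : ((1 : A) + (n : A) * u + u ^ 2 * q) v
            = v + (n:ℝ) • (u v) + (u^2 * q) v := by
          simp only [ContinuousLinearMap.add_apply, ContinuousLinearMap.one_apply,
            ContinuousLinearMap.mul_apply, natCast_apply']
        rw [this, map_add, map_add, map_smul]
        have hq1 : (u ^ (m-2)) ((u^2 * q) v) = q ((u ^ m) v) := by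
          have : u ^ (m-2) * (u^2 * q) = q * u ^ m := by
            rw [← mul_assoc, ← pow_add, show m - 2 + 2 = m by omega]
            exact ((hq.pow_left m).eq)
          have h2 := congrFun (congrArg DFunLike.coe this) v
          simp only [ContinuousLinearMap.mul_apply] at h2
          exact h2
        rw [hq1, hmv, map_zero, add_zero]
        have h3 : (u ^ (m-2)) (u v) = w := by
          have h3' := congrFun (congrArg DFunLike.coe (pow_add u (m-2) 1).symm) v
          simp only [ContinuousLinearMap.mul_apply, pow_one] at h3'
          rw [show m - 2 + 1 = m - 1 by omega] at h3'
          rw [hwdef, ← h3']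
        rw [h3]
      have h4 : ‖(u ^ (m-2)) v + (n:ℝ) • w‖ ≤ ‖u ^ (m-2)‖ * B := by
        rw [← heval]
        calc ‖(u ^ (m-2)) (((gu ^ n : Aˣ) : A) v)‖
            ≤ ‖u ^ (m-2)‖ * ‖((gu ^ n : Aˣ) : A) v‖ := ContinuousLinearMap.le_opNorm _ _
          _ ≤ ‖u ^ (m-2)‖ * B := mul_le_mul_of_nonneg_left (hB n) (norm_nonneg _)
      have h6 : ‖(n:ℝ) • w‖ ≤ ‖(u ^ (m-2)) v + (n:ℝ) • w‖ + ‖(u ^ (m-2)) v‖ := by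
        calc ‖(n:ℝ) • w‖ = ‖((u ^ (m-2)) v + (n:ℝ) • w) - (u ^ (m-2)) v‖ := by
              rw [add_sub_cancel_left]
          _ ≤ _ := norm_sub_le _ _
      rw [norm_smul, Real.norm_eq_abs, abs_of_nonneg (Nat.cast_nonneg n)] at h6
      linarith
    have hw0 : ‖w‖ > 0 := norm_pos_iff.mpr hne
    obtain ⟨n, hn⟩ := exists_nat_gt ((‖u ^ (m-2)‖ * B + ‖(u ^ (m-2)) v‖) / ‖w‖)
    have := hb n
    rw [div_lt_iff₀ hw0] at hn
    linarith
  · interval_cases m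
    · have : v = 0 := by simpa using hmv
      rw [this, map_zero]
    · have : u v = 0 := by simpa using hmv
      have : ((gu : A) - 1) v = 0 := this
      rw [ContinuousLinearMap.sub_apply, ContinuousLinearMap.one_apply, sub_eq_zero] at this
      exact this

end AuxBO

theorem bounded_orbit_iff_fixed_by_hyperbolic_unipotent {V : Type*}
    [NormedAddCommGroup V] [NormedSpace ℝ V] [FiniteDimensional ℝ V]
    (g ge gh gu : (V →L[ℝ] V)ˣ)
    (hcomm₁ : ge * gh = gh * ge) (hcomm₂ : ge * gu = gu * ge)
    (hcomm₃ : gh * gu = gu * gh)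
    (hg : g = ge * gh * gu)
    (hell : IsCompact (closure (Set.range fun n : ℤ => ge ^ n)))
    (hhyp : ∃ (b : Module.Basis (Fin (Module.finrank ℝ V)) ℝ V)
        (c : Fin (Module.finrank ℝ V) → ℝ),
        (∀ i, 0 < c i) ∧ ∀ i, (gh : V →L[ℝ] V) (b i) = c i • b i)
    (huni : ∃ N : ℕ, ((gu : V →L[ℝ] V) - 1) ^ N = 0)
    (v : V) :
    (IsBounded (Set.range fun n : ℕ => ((g ^ n : (V →L[ℝ] V)ˣ) : V →L[ℝ] V) v) ∧
      IsBounded (Set.range fun n : ℕ => ((g⁻¹ ^ n : (V →L[ℝ] V)ˣ) : V →L[ℝ] V) v)) ↔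
    ((gh * gu : (V →L[ℝ] V)ˣ) : V →L[ℝ] V) v = v := by
  classical
  obtain ⟨b, c, hcpos, hbeig⟩ := hhyp
  obtain ⟨N, hN⟩ := huni
  have hc₁ : Commute ge gh := hcomm₁
  have hc₂ : Commute ge gu := hcomm₂
  have hc₃ : Commute gh gu := hcomm₃
  obtain ⟨Ce, hCe0, hCe⟩ := elliptic_bound hell
  have hCeN : ∀ n : ℕ, ‖((ge ^ n : (V →L[ℝ] V)ˣ) : V →L[ℝ] V)‖ ≤ Ce := fun n => by
    have := hCe (n : ℤ); rwa [zpow_natCast] at this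
  have hCeN' : ∀ n : ℕ, ‖((ge⁻¹ ^ n : (V →L[ℝ] V)ˣ) : V →L[ℝ] V)‖ ≤ Ce := fun n => by
    have := hCe (-(n:ℤ)); rwa [zpow_neg, zpow_natCast, ← inv_pow] at this
  set u : V →L[ℝ] V := (gu : V →L[ℝ] V) - 1 with hudef
  have hgu1 : (gu : V →L[ℝ] V) = 1 + u := by rw [hudef]; abel
  obtain ⟨Cu, hCu0, hCub⟩ := unip_bound hN
  have hCuN : ∀ n : ℕ, ‖((gu ^ n : (V →L[ℝ] V)ˣ) : V →L[ℝ] V)‖ ≤ Cu * (n + 1) ^ (N + 1) :=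
    fun n => by rw [Units.val_pow_eq_pow_val, hgu1]; exact hCub n
  -- bounds for gu⁻¹ powers
  have hcgu : Commute ((gu⁻¹ : (V →L[ℝ] V)ˣ) : V →L[ℝ] V) u := by
    refine Commute.sub_right ?_ (Commute.one_right _)
    show _ * _ = _ * _
    rw [Units.inv_mul, Units.mul_inv]
  set u' : V →L[ℝ] V := ((gu⁻¹ : (V →L[ℝ] V)ˣ) : V →L[ℝ] V) - 1 with hu'def
  have hu'eq : u' = ((gu⁻¹ : (V →L[ℝ] V)ˣ) : V →L[ℝ] V) * (-u) := by
    rw [mul_neg, show ((gu⁻¹ : (V →L[ℝ] V)ˣ) : V →L[ℝ] V) * u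
      = 1 - ((gu⁻¹ : (V →L[ℝ] V)ˣ) : V →L[ℝ] V) by
        rw [hudef, mul_sub, Units.inv_mul, mul_one], neg_sub, hu'def]
  have hu' : u' ^ N = 0 := by
    rw [hu'eq, (hcgu.neg_right).mul_pow, neg_pow, hN]
    simp
  have hgu1' : ((gu⁻¹ : (V →L[ℝ] V)ˣ) : V →L[ℝ] V) = 1 + u' := by rw [hu'def]; abel
  obtain ⟨Cu', hCu'0, hCu'b⟩ := unip_bound hu'
  have hCuN' : ∀ n : ℕ, ‖((gu⁻¹ ^ n : (V →L[ℝ] V)ˣ) : V →L[ℝ] V)‖ ≤ Cu' * (n + 1) ^ (N + 1) :=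
    fun n => by rw [Units.val_pow_eq_pow_val, hgu1']; exact hCu'b n
  -- decomposition of powers of g
  have hgn : ∀ n : ℕ, (g ^ n : (V →L[ℝ] V)ˣ) = ge ^ n * (gh ^ n * gu ^ n) := fun n => by
    rw [hg, mul_assoc, (hc₁.mul_right hc₂).mul_pow, hc₃.mul_pow]
  have hginv : g⁻¹ = ge⁻¹ * gh⁻¹ * gu⁻¹ := by
    rw [hg]
    calc (ge * gh * gu)⁻¹ = gu⁻¹ * (gh⁻¹ * ge⁻¹) := by rw [mul_inv_rev, mul_inv_rev]
      _ = (gh⁻¹ * ge⁻¹) * gu⁻¹ := by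
          rw [← mul_inv_rev, ← mul_inv_rev]
          exact ((hc₂.mul_left hc₃).inv_inv).symm.eq
      _ = ge⁻¹ * gh⁻¹ * gu⁻¹ := by rw [(hc₁.inv_inv).symm.eq]
  constructor
  · rintro ⟨hbd1, hbd2⟩
    obtain ⟨B1, hB1⟩ := isBounded_iff_forall_norm_le.mp hbd1
    obtain ⟨B2, hB2⟩ := isBounded_iff_forall_norm_le.mp hbd2
    have hB1' : ∀ n : ℕ, ‖((g ^ n : (V →L[ℝ] V)ˣ) : V →L[ℝ] V) v‖ ≤ B1 :=
      fun n => hB1 _ ⟨n, rfl⟩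
    have hB2' : ∀ n : ℕ, ‖((g⁻¹ ^ n : (V →L[ℝ] V)ˣ) : V →L[ℝ] V) v‖ ≤ B2 :=
      fun n => hB2 _ ⟨n, rfl⟩
    -- commutation of g-powers with gh as operators
    have hghg : Commute gh g := by
      rw [hg]
      exact ((hc₁.symm.mul_right (Commute.refl gh)).mul_right hc₃)
    have hop : ∀ G : (V →L[ℝ] V)ˣ, Commute gh G →
        (gh : V →L[ℝ] V) * (G : V →L[ℝ] V) = (G : V →L[ℝ] V) * (gh : V →L[ℝ] V) := by
      intro G hG
      have := congrArg Units.val hG.eq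
      simpa [Units.val_mul] using this
    -- eigencomponents with eigenvalue ≠ 1 vanish
    have hrepr : ∀ i, c i ≠ 1 → b.repr v i = 0 := by
      intro i hi
      set t := c i with ht
      set P := LinearMap.toContinuousLinearMap (eigProj b c t) with hP
      have hPapp : ∀ w : V, P w = eigProj b c t w := fun w => by
        rw [hP, LinearMap.coe_toContinuousLinearMap']
      set x := eigProj b c t v with hx
      have hxeig : (gh : V →L[ℝ] V) x = t • x := eigProj_is_eig b c hbeig t v
      have hbound : ∀ n : ℕ, ‖((g ^ n : (V →L[ℝ] V)ˣ) : V →L[ℝ] V) x‖ ≤ ‖P‖ * B1 := by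
        intro n
        have h1 : ((g ^ n : (V →L[ℝ] V)ˣ) : V →L[ℝ] V) x
            = P (((g ^ n : (V →L[ℝ] V)ˣ) : V →L[ℝ] V) v) := by
          rw [hPapp, hx, eigProj_comm b c hbeig (hop _ (hghg.pow_right n)) t v]
        rw [h1]
        calc ‖P (((g ^ n : (V →L[ℝ] V)ˣ) : V →L[ℝ] V) v)‖
            ≤ ‖P‖ * ‖((g ^ n : (V →L[ℝ] V)ˣ) : V →L[ℝ] V) v‖ :=
              ContinuousLinearMap.le_opNorm _ _
          _ ≤ ‖P‖ * B1 := mul_le_mul_of_nonneg_left (hB1' n) (norm_nonneg _)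
      have hbound' : ∀ n : ℕ, ‖((g⁻¹ ^ n : (V →L[ℝ] V)ˣ) : V →L[ℝ] V) x‖ ≤ ‖P‖ * B2 := by
        intro n
        have h1 : ((g⁻¹ ^ n : (V →L[ℝ] V)ˣ) : V →L[ℝ] V) x
            = P (((g⁻¹ ^ n : (V →L[ℝ] V)ˣ) : V →L[ℝ] V) v) := by
          rw [hPapp, hx, eigProj_comm b c hbeig (hop _ ((hghg.inv_right).pow_right n)) t v]
        rw [h1]
        calc ‖P (((g⁻¹ ^ n : (V →L[ℝ] V)ˣ) : V →L[ℝ] V) v)‖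
            ≤ ‖P‖ * ‖((g⁻¹ ^ n : (V →L[ℝ] V)ˣ) : V →L[ℝ] V) v‖ :=
              ContinuousLinearMap.le_opNorm _ _
          _ ≤ ‖P‖ * B2 := mul_le_mul_of_nonneg_left (hB2' n) (norm_nonneg _)
      have hx0 : x = 0 := by
        rcases hi.lt_or_gt with hlt | hgt
        · -- t < 1 : use g⁻¹
          have hxeig' : ((gh⁻¹ : (V →L[ℝ] V)ˣ) : V →L[ℝ] V) x = t⁻¹ • x := by
            have h2 : ((gh⁻¹ * gh : (V →L[ℝ] V)ˣ) : V →L[ℝ] V) x = x := by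
              rw [inv_mul_cancel]
              simp
            rw [val_mul_apply, hxeig, map_smul] at h2
            rw [eq_comm, inv_smul_eq_iff₀ (hcpos i).ne', ← ht, h2]
          exact eig_zero g⁻¹ ge⁻¹ gh⁻¹ gu⁻¹ hc₁.inv_inv hc₂.inv_inv hc₃.inv_inv hginv
            Ce (by simpa [inv_inv] using hCeN)
            Cu (N + 1) (by simpa [inv_inv] using hCuN)
            (one_lt_inv₀ (hcpos i) |>.mpr hlt) hxeig' (‖P‖ * B2) hbound'
        · exact eig_zero g ge gh gu hc₁ hc₂ hc₃ hg Ce hCeN' Cu' (N + 1) hCuN'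
            hgt hxeig (‖P‖ * B1) hbound
      have h3 := eigProj_repr b c t v (rfl : c i = t)
      rw [← hx, hx0, map_zero] at h3
      exact h3.symm ▸ (by simp : (0 : Fin (Module.finrank ℝ V) →₀ ℝ) i = 0) ▸ rfl
    -- gh fixes v
    have hghv : (gh : V →L[ℝ] V) v = v := by
      conv_lhs => rw [← b.sum_repr v]
      conv_rhs => rw [← b.sum_repr v]
      rw [map_sum]
      refine Finset.sum_congr rfl fun i _ => ?_
      rw [map_smul, hbeig i]
      by_cases hci : c i = 1
      · rw [hci, one_smul]
      · rw [hrepr i hci, zero_smul, zero_smul]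
    -- gu^n v is bounded
    have hguB : ∀ n : ℕ, ‖((gu ^ n : (V →L[ℝ] V)ˣ) : V →L[ℝ] V) v‖ ≤ Ce * B1 := by
      intro n
      have heig1 : (gh : V →L[ℝ] V) (((gu ^ n : (V →L[ℝ] V)ˣ) : V →L[ℝ] V) v)
          = (1:ℝ) • ((gu ^ n : (V →L[ℝ] V)ˣ) : V →L[ℝ] V) v := by
        rw [one_smul, commute_apply (hc₃.pow_right n), hghv]
      have h1 : ((g ^ n : (V →L[ℝ] V)ˣ) : V →L[ℝ] V) v
          = ((ge ^ n : (V →L[ℝ] V)ˣ) : V →L[ℝ] V)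
            (((gu ^ n : (V →L[ℝ] V)ˣ) : V →L[ℝ] V) v) := by
        rw [hgn n, val_mul_apply, val_mul_apply, pow_eig gh heig1 n, one_pow, one_smul]
      have h2 : ((gu ^ n : (V →L[ℝ] V)ˣ) : V →L[ℝ] V) v
          = ((ge⁻¹ ^ n : (V →L[ℝ] V)ˣ) : V →L[ℝ] V)
            (((g ^ n : (V →L[ℝ] V)ˣ) : V →L[ℝ] V) v) := by
        rw [h1, ← val_mul_apply, show (ge⁻¹ ^ n * ge ^ n : (V →L[ℝ] V)ˣ) = 1 by group]
        simp
      rw [h2]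
      calc ‖((ge⁻¹ ^ n : (V →L[ℝ] V)ˣ) : V →L[ℝ] V)
            (((g ^ n : (V →L[ℝ] V)ˣ) : V →L[ℝ] V) v)‖
          ≤ ‖((ge⁻¹ ^ n : (V →L[ℝ] V)ˣ) : V →L[ℝ] V)‖
            * ‖((g ^ n : (V →L[ℝ] V)ˣ) : V →L[ℝ] V) v‖ := ContinuousLinearMap.le_opNorm _ _
        _ ≤ Ce * B1 := mul_le_mul (hCeN' n) (hB1' n) (norm_nonneg _) (le_of_lt hCe0)
    have hguv : (gu : V →L[ℝ] V) v = v := unip_fixed hN hguB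
    rw [val_mul_apply, hguv, hghv]
  · intro hfix
    have hk : Commute ge (gh * gu) := hc₁.mul_right hc₂
    have hg' : g = ge * (gh * gu) := by rw [hg, mul_assoc]
    have hkv : ((gh * gu : (V →L[ℝ] V)ˣ) : V →L[ℝ] V) v = (1:ℝ) • v := by
      rw [hfix, one_smul]
    have hkinv : (((gh * gu)⁻¹ : (V →L[ℝ] V)ˣ) : V →L[ℝ] V) v = (1:ℝ) • v := by
      have h2 : (((gh * gu)⁻¹ * (gh * gu) : (V →L[ℝ] V)ˣ) : V →L[ℝ] V) v = v := by
        rw [inv_mul_cancel]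
        simp
      rw [val_mul_apply, hfix] at h2
      rw [h2, one_smul]
    have hfor : ∀ n : ℕ, ((g ^ n : (V →L[ℝ] V)ˣ) : V →L[ℝ] V) v
        = ((ge ^ n : (V →L[ℝ] V)ˣ) : V →L[ℝ] V) v := by
      intro n
      rw [hg', hk.mul_pow, val_mul_apply, pow_eig _ hkv n, one_pow, one_smul]
    have hback : ∀ n : ℕ, ((g⁻¹ ^ n : (V →L[ℝ] V)ˣ) : V →L[ℝ] V) v
        = ((ge⁻¹ ^ n : (V →L[ℝ] V)ˣ) : V →L[ℝ] V) v := by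
      intro n
      rw [hg', mul_inv_rev, ← hk.inv_inv.eq, hk.inv_inv.mul_pow, val_mul_apply,
        pow_eig _ hkinv n, one_pow, one_smul]
    constructor
    · refine isBounded_iff_forall_norm_le.mpr ⟨Ce * ‖v‖, ?_⟩
      rintro w ⟨n, rfl⟩
      simp only
      rw [hfor n]
      calc ‖((ge ^ n : (V →L[ℝ] V)ˣ) : V →L[ℝ] V) v‖
          ≤ ‖((ge ^ n : (V →L[ℝ] V)ˣ) : V →L[ℝ] V)‖ * ‖v‖ := ContinuousLinearMap.le_opNorm _ _
        _ ≤ Ce * ‖v‖ := mul_le_mul_of_nonneg_right (hCeN n) (norm_nonneg _)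
    · refine isBounded_iff_forall_norm_le.mpr ⟨Ce * ‖v‖, ?_⟩
      rintro w ⟨n, rfl⟩
      simp only
      rw [hback n]
      calc ‖((ge⁻¹ ^ n : (V →L[ℝ] V)ˣ) : V →L[ℝ] V) v‖
          ≤ ‖((ge⁻¹ ^ n : (V →L[ℝ] V)ˣ) : V →L[ℝ] V)‖ * ‖v‖ := ContinuousLinearMap.le_opNorm _ _
        _ ≤ Ce * ‖v‖ := mul_le_mul_of_nonneg_right (hCeN' n) (norm_nonneg _)
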